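/- Let U ⊆ V ⊆ R^d be monomial submodules (i.e., each is generated by module monomials) and ≺ a monomial order on R^d. Then the reduced Gröbner basis H of V relative to U is a minimal generating set of the quotient module V/U, i.e., the images {h + U : h ∈ H} generate V/U and no proper subset of these images generates V/U. -/

import Mathlib

attribute [local instance] Classical.propDecidable

noncomputable section

/-- Module monomial index: an exponent vector together with a component index. -/
abbrev ModMon (n d : ℕ) := (Fin n →₀ ℕ) × Fin d

/-- The free module `R^d` over `R = k[X_1, …, X_n]`. -/
abbrev FreeMod (k : Type*) [Field k] (n d : ℕ) := Fin d → MvPolynomial (Fin n) k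

variable {k : Type*} [Field k] {n d : ℕ}

/-- The module monomial `X^α e_i` as an element of `R^d`. -/
def mmVec (m : ModMon n d) : FreeMod k n d :=
  Pi.single m.2 (MvPolynomial.monomial m.1 (1 : k))

/-- The support of `f ∈ R^d` as a finite set of module monomials. -/
def suppF (f : FreeMod k n d) : Finset (ModMon n d) :=
  (Finset.univ : Finset (Fin d)).biUnion fun i =>
    ((f i).support.image fun a => ((a, i) : ModMon n d))

/-- A monomial order on `R^d`: a well-founded total order on module monomials such that
`e_i ⪯ X^α e_i` and which is compatible with multiplication by monomials. -/
structure ModMonOrder (n d : ℕ) where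
  toOrd : LinearOrder (ModMon n d)
  wf : WellFounded toOrd.lt
  base_le : ∀ (i : Fin d) (a : Fin n →₀ ℕ), toOrd.le (0, i) (a, i)
  add_le : ∀ (a b c : Fin n →₀ ℕ) (i j : Fin d),
    toOrd.le (b, i) (c, j) → toOrd.le (a + b, i) (a + c, j)

namespace ModMonOrder

variable (ord : ModMonOrder n d)

/-- The leading monomial of `f` (`⊥` if `f = 0`). -/
def lmo (f : FreeMod k n d) : WithBot (ModMon n d) :=
  letI := ord.toOrd
  (suppF f).max

/-- The order on leading monomials, extended to `WithBot` (with `⊥` smallest). -/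
def leB (x y : WithBot (ModMon n d)) : Prop :=
  WithBot.recBotCoe True
    (fun a => WithBot.recBotCoe False (fun b => ord.toOrd.le a b) y) x

/-- The leading coefficient of `f` (`0` if `f = 0`). -/
def lc (f : FreeMod k n d) : k :=
  WithBot.recBotCoe 0 (fun m => (f m.2).coeff m.1) (ord.lmo f)

/-- The leading monomial of `f`, as an element of `R^d` (`0` if `f = 0`). -/
def lmVec (f : FreeMod k n d) : FreeMod k n d :=
  WithBot.recBotCoe 0 (fun m => mmVec m) (ord.lmo f)

/-- `lm(W)`: the submodule generated by the leading monomials of nonzero elements of `W`. -/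
def lmSub (W : Submodule (MvPolynomial (Fin n) k) (FreeMod k n d)) :
    Submodule (MvPolynomial (Fin n) k) (FreeMod k n d) :=
  Submodule.span (MvPolynomial (Fin n) k) {v | ∃ f ∈ W, f ≠ 0 ∧ v = ord.lmVec f}

end ModMonOrder

/-- Divisibility in `R^d`: `u` divides `v` iff `v = p • u` for some polynomial `p`. -/
def dvdV (u v : FreeMod k n d) : Prop := ∃ p : MvPolynomial (Fin n) k, v = p • u

/-- `G` is a Gröbner basis of the submodule `W ⊆ R^d`. -/
def IsGB (ord : ModMonOrder n d) (W : Submodule (MvPolynomial (Fin n) k) (FreeMod k n d))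
    (G : Finset (FreeMod k n d)) : Prop :=
  Submodule.span (MvPolynomial (Fin n) k) (G : Set (FreeMod k n d)) = W ∧
  Submodule.span (MvPolynomial (Fin n) k) (ord.lmVec '' (G : Set (FreeMod k n d))) = ord.lmSub W

/-- `G` is the reduced Gröbner basis of `W ⊆ R^d`. -/
def IsRedGB (ord : ModMonOrder n d) (W : Submodule (MvPolynomial (Fin n) k) (FreeMod k n d))
    (G : Finset (FreeMod k n d)) : Prop :=
  IsGB ord W G ∧
  (∀ g ∈ G, ∀ g' ∈ G, g ≠ g' → ¬ dvdV (ord.lmVec g) (ord.lmVec g')) ∧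
  ∀ g ∈ G, ord.lc g = 1 ∧ ∀ m ∈ suppF (g - ord.lmVec g), mmVec m ∉ ord.lmSub W

/-- `p` is a normal form of `f` modulo `U`: `f - p ∈ U` and `p` is supported on
module monomials outside `lm(U)`. -/
def IsNF (ord : ModMonOrder n d) (U : Submodule (MvPolynomial (Fin n) k) (FreeMod k n d))
    (f p : FreeMod k n d) : Prop :=
  f - p ∈ U ∧ ∀ m ∈ suppF p, mmVec m ∉ ord.lmSub U

/-- `H` is a Gröbner basis of `V` relative to `U`. -/
def IsRelGB (ord : ModMonOrder n d) (U V : Submodule (MvPolynomial (Fin n) k) (FreeMod k n d))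
    (H : Finset (FreeMod k n d)) : Prop :=
  (H : Set (FreeMod k n d)) ⊆ (V : Set (FreeMod k n d)) \ (U : Set (FreeMod k n d)) ∧
  (∀ h ∈ H, ∀ m ∈ suppF h, mmVec m ∉ ord.lmSub U) ∧
  Submodule.span (MvPolynomial (Fin n) k) (ord.lmVec '' (H : Set (FreeMod k n d))) ⊔ ord.lmSub U
    = ord.lmSub V

/-- `H` is a minimal Gröbner basis of `V` relative to `U`. -/
def IsMinRelGB (ord : ModMonOrder n d) (U V : Submodule (MvPolynomial (Fin n) k) (FreeMod k n d))
    (H : Finset (FreeMod k n d)) : Prop :=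
  IsRelGB ord U V H ∧
  ∀ h ∈ H, ∀ h' ∈ H, h ≠ h' → ¬ dvdV (ord.lmVec h) (ord.lmVec h')

/-- `H` is the reduced Gröbner basis of `V` relative to `U`. -/
def IsRedRelGB (ord : ModMonOrder n d) (U V : Submodule (MvPolynomial (Fin n) k) (FreeMod k n d))
    (H : Finset (FreeMod k n d)) : Prop :=
  IsMinRelGB ord U V H ∧
  ∀ h ∈ H, ord.lc h = 1 ∧ ∀ m ∈ suppF (h - ord.lmVec h), mmVec m ∉ ord.lmSub V

end

section Aux

variable {k : Type*} [Field k] {n d : ℕ}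

lemma mem_suppF_iff {f : FreeMod k n d} {m : ModMon n d} :
    m ∈ suppF f ↔ (f m.2).coeff m.1 ≠ 0 := by
  constructor
  · intro hm
    simp only [suppF, Finset.mem_biUnion, Finset.mem_univ, true_and, Finset.mem_image] at hm
    obtain ⟨i, a, ha, rfl⟩ := hm
    simpa [MvPolynomial.mem_support_iff] using ha
  · intro hm
    simp only [suppF, Finset.mem_biUnion, Finset.mem_univ, true_and, Finset.mem_image]
    exact ⟨m.2, m.1, by simpa [MvPolynomial.mem_support_iff] using hm, rfl⟩

lemma eq_zero_of_suppF {f : FreeMod k n d} (h : ∀ m, m ∉ suppF f) : f = 0 := by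
  funext i
  ext a
  have := h (a, i)
  rw [mem_suppF_iff, not_not] at this
  simpa using this

lemma coeff_mmVec (s : ModMon n d) (i : Fin d) (a : Fin n →₀ ℕ) :
    ((mmVec s : FreeMod k n d) i).coeff a = if i = s.2 ∧ a = s.1 then (1 : k) else 0 := by
  unfold mmVec
  rcases eq_or_ne i s.2 with h | h
  · subst h
    simp [MvPolynomial.coeff_monomial, eq_comm]
  · simp [Pi.single_eq_of_ne h, h]

lemma suppF_mmVec (s : ModMon n d) : suppF (mmVec s : FreeMod k n d) = {s} := by
  ext m
  simp only [mem_suppF_iff, coeff_mmVec, Finset.mem_singleton]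
  rcases eq_or_ne m s with h | h
  · subst h; simp
  · have : ¬(m.2 = s.2 ∧ m.1 = s.1) := by
      intro ⟨h1, h2⟩; exact h (Prod.ext h2 h1)
    simp [this, h]

lemma mmVec_ne_zero (s : ModMon n d) : (mmVec s : FreeMod k n d) ≠ 0 := by
  intro h
  have : s ∈ suppF (mmVec s : FreeMod k n d) := by rw [suppF_mmVec]; simp
  rw [h] at this
  rw [mem_suppF_iff] at this
  simp at this

lemma monomial_smul_mmVec (β : Fin n →₀ ℕ) (s : ModMon n d) :
    (MvPolynomial.monomial β (1 : k)) • (mmVec s : FreeMod k n d) = mmVec (β + s.1, s.2) := by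
  funext i
  simp only [Pi.smul_apply, mmVec, smul_eq_mul]
  rcases eq_or_ne i s.2 with h | h
  · subst h
    simp [MvPolynomial.monomial_mul]
  · simp [Pi.single_eq_of_ne h]

lemma suppF_span_induction (S : Set (ModMon n d)) (P : ModMon n d → Prop)
    (hS : ∀ s ∈ S, P s)
    (hmul : ∀ (β : Fin n →₀ ℕ) (m : ModMon n d), P m → P (β + m.1, m.2)) :
    ∀ f ∈ Submodule.span (MvPolynomial (Fin n) k) ((mmVec '' S : Set (FreeMod k n d))),
      ∀ m ∈ suppF f, P m := by
  intro f hf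
  induction hf using Submodule.span_induction with
  | mem g hg =>
    obtain ⟨s, hs, rfl⟩ := hg
    intro m hm
    rw [suppF_mmVec, Finset.mem_singleton] at hm
    exact hm ▸ hS s hs
  | zero =>
    intro m hm
    rw [mem_suppF_iff] at hm
    simp at hm
  | add x y hx hy ihx ihy =>
    intro m hm
    rw [mem_suppF_iff] at hm
    rcases (by by_contra hc; push_neg at hc; simp [Pi.add_apply, hc.1, hc.2] at hm :
        (x m.2).coeff m.1 ≠ 0 ∨ (y m.2).coeff m.1 ≠ 0) with h | h
    · exact ihx m (mem_suppF_iff.2 h)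
    · exact ihy m (mem_suppF_iff.2 h)
  | smul p x hx ihx =>
    intro m hm
    rw [mem_suppF_iff] at hm
    have hm' : m.1 ∈ (p * x m.2).support := by
      rw [MvPolynomial.mem_support_iff]; exact hm
    have := MvPolynomial.support_mul p (x m.2) hm'
    rw [Finset.mem_add] at this
    obtain ⟨a, ha, b, hb, hab⟩ := this
    have hPb : P (b, m.2) := ihx (b, m.2) (mem_suppF_iff.2 (by
      rw [MvPolynomial.mem_support_iff] at hb; exact hb))
    have := hmul a (b, m.2) hPb
    have heq : ((a + b, m.2) : ModMon n d) = m := Prod.ext hab rfl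
    exact heq ▸ this

lemma mem_of_mem_suppF {S : Set (ModMon n d)} {f : FreeMod k n d}
    (hf : f ∈ Submodule.span (MvPolynomial (Fin n) k) (mmVec '' S)) {m : ModMon n d}
    (hm : m ∈ suppF f) :
    (mmVec m : FreeMod k n d) ∈ Submodule.span (MvPolynomial (Fin n) k) (mmVec '' S) :=
  suppF_span_induction S
    (fun m => (mmVec m : FreeMod k n d) ∈ Submodule.span (MvPolynomial (Fin n) k) (mmVec '' S))
    (fun s hs => Submodule.subset_span ⟨s, hs, rfl⟩)
    (fun β m hm => by
      rw [← monomial_smul_mmVec]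
      exact Submodule.smul_mem _ _ hm) f hf m hm

lemma lmo_mmVec (ord : ModMonOrder n d) (s : ModMon n d) :
    ord.lmo (mmVec s : FreeMod k n d) = (s : WithBot (ModMon n d)) := by
  letI := ord.toOrd
  show (suppF (mmVec s : FreeMod k n d)).max = _
  rw [suppF_mmVec]
  exact Finset.max_singleton

lemma lmVec_mmVec (ord : ModMonOrder n d) (s : ModMon n d) :
    ord.lmVec (mmVec s : FreeMod k n d) = mmVec s := by
  unfold ModMonOrder.lmVec
  rw [lmo_mmVec]
  rfl

lemma exists_lmo (ord : ModMonOrder n d) {f : FreeMod k n d} (hf : f ≠ 0) :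
    ∃ m₀ : ModMon n d, m₀ ∈ suppF f ∧ ord.lmVec f = mmVec m₀ ∧
      ord.lc f = (f m₀.2).coeff m₀.1 := by
  letI := ord.toOrd
  have hne : (suppF f).Nonempty := by
    by_contra hc
    rw [Finset.not_nonempty_iff_eq_empty] at hc
    exact hf (eq_zero_of_suppF (fun m hm => by rw [hc] at hm; simp at hm))
  obtain ⟨m₀, hm₀⟩ := Finset.max_of_nonempty hne
  have hmem : m₀ ∈ suppF f := Finset.mem_of_max hm₀
  have hlmo : ord.lmo f = (m₀ : WithBot (ModMon n d)) := hm₀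
  refine ⟨m₀, hmem, ?_, ?_⟩
  · unfold ModMonOrder.lmVec
    rw [hlmo]
    rfl
  · unfold ModMonOrder.lc
    rw [hlmo]
    rfl

lemma lmSub_eq_self (ord : ModMonOrder n d)
    {W : Submodule (MvPolynomial (Fin n) k) (FreeMod k n d)} {S : Set (ModMon n d)}
    (hW : W = Submodule.span (MvPolynomial (Fin n) k) (mmVec '' S)) :
    ord.lmSub W = W := by
  apply le_antisymm
  · rw [ModMonOrder.lmSub, Submodule.span_le]
    rintro v ⟨f, hfW, hf0, rfl⟩
    obtain ⟨m₀, hm₀, hlm, -⟩ := exists_lmo ord hf0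
    rw [hlm]
    rw [hW] at hfW ⊢
    exact mem_of_mem_suppF hfW hm₀
  · conv_lhs => rw [hW]
    rw [Submodule.span_le]
    rintro v ⟨s, hs, rfl⟩
    apply Submodule.subset_span
    exact ⟨mmVec s, hW ▸ Submodule.subset_span ⟨s, hs, rfl⟩, mmVec_ne_zero s,
      (lmVec_mmVec ord s).symm⟩

end Aux

/-- If `U ⊆ V ⊆ R^d` are monomial submodules, then the reduced Gröbner basis `H` of `V`
relative to `U` is a minimal generating set of `V/U`: the images `{h + U : h ∈ H}` generate
`V/U` and no proper subset of these images generates `V/U`. -/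
theorem reduced_relative_groebner_basis_minimal_for_monomial_modules
    {k : Type*} [Field k] {n d : ℕ}
    (ord : ModMonOrder n d)
    (U V : Submodule (MvPolynomial (Fin n) k) (FreeMod k n d))
    (hUV : U ≤ V)
    (hUmon : ∃ S : Set (ModMon n d),
      U = Submodule.span (MvPolynomial (Fin n) k) (mmVec '' S))
    (hVmon : ∃ S : Set (ModMon n d),
      V = Submodule.span (MvPolynomial (Fin n) k) (mmVec '' S))
    (H : Finset (FreeMod k n d))
    (hH : IsRedRelGB ord U V H) :
    Submodule.span (MvPolynomial (Fin n) k) (U.mkQ '' (H : Set (FreeMod k n d)))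
        = V.map U.mkQ ∧
      ∀ T ⊂ U.mkQ '' (H : Set (FreeMod k n d)),
        Submodule.span (MvPolynomial (Fin n) k) T ≠ V.map U.mkQ := by
  obtain ⟨SU, hSU⟩ := hUmon
  obtain ⟨SV, hSV⟩ := hVmon
  obtain ⟨⟨⟨hsub, hsuppU, hspan⟩, hmin⟩, hred⟩ := hH
  have hlmU : ord.lmSub U = U := lmSub_eq_self ord hSU
  have hlmV : ord.lmSub V = V := lmSub_eq_self ord hSV
  -- Every element of `H` is a monomial (with coefficient 1), equal to its own leading monomial.
  have hmono : ∀ h ∈ H, ∃ m₀ : ModMon n d, h = mmVec m₀ ∧ ord.lmVec h = h := by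
    intro h hh
    have hVU := hsub (Finset.mem_coe.2 hh)
    have hhV : h ∈ V := hVU.1
    have hhU : h ∉ U := hVU.2
    have hne : h ≠ 0 := fun h0 => hhU (h0 ▸ U.zero_mem)
    obtain ⟨m₀, hm₀, hlm, hlc⟩ := exists_lmo ord hne
    have hlc1 : (h m₀.2).coeff m₀.1 = 1 := by rw [← hlc]; exact (hred h hh).1
    have hzero : h - mmVec m₀ = 0 := by
      apply eq_zero_of_suppF
      intro m hm
      have hm' := hm
      rw [mem_suppF_iff] at hm'
      simp only [Pi.sub_apply, MvPolynomial.coeff_sub] at hm'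
      rcases eq_or_ne m m₀ with rfl | hne'
      · rw [hlc1, coeff_mmVec] at hm'; simp at hm'
      · have hcm : ((mmVec m₀ : FreeMod k n d) m.2).coeff m.1 = 0 := by
          rw [coeff_mmVec]
          have : ¬(m.2 = m₀.2 ∧ m.1 = m₀.1) := fun ⟨h1, h2⟩ => hne' (Prod.ext h2 h1)
          simp [this]
        rw [hcm, sub_zero] at hm'
        have hmsupp : m ∈ suppF h := mem_suppF_iff.2 hm'
        have hmV : mmVec m ∈ V := by
          have h1 : h ∈ Submodule.span (MvPolynomial (Fin n) k)
              ((mmVec '' SV : Set (FreeMod k n d))) := by rw [← hSV]; exact hhV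
          have := mem_of_mem_suppF h1 hmsupp
          rw [← hSV] at this
          exact this
        exact (hred h hh).2 m (by rw [hlm]; exact hm) (by rw [hlmV]; exact hmV)
    have heq : h = mmVec m₀ := sub_eq_zero.mp hzero
    exact ⟨m₀, heq, by rw [heq] at hlm ⊢; rw [hlm]⟩
  have hlmid : ∀ h ∈ (H : Set (FreeMod k n d)), ord.lmVec h = h :=
    fun h hh => (hmono h hh).choose_spec.2
  have himg : ord.lmVec '' (H : Set (FreeMod k n d)) = (H : Set (FreeMod k n d)) := by
    rw [Set.image_congr hlmid, Set.image_id']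
  have key : Submodule.span (MvPolynomial (Fin n) k) (H : Set (FreeMod k n d)) ⊔ U = V := by
    have := hspan
    rw [hlmU, hlmV, himg] at this
    exact this
  constructor
  · rw [← key, Submodule.map_sup, Submodule.map_span, Submodule.mkQ_map_self, sup_bot_eq]
  · intro T hT hspanT
    obtain ⟨x, hx, hxT⟩ := Set.exists_of_ssubset hT
    obtain ⟨h, hhH, rfl⟩ := hx
    set H₀ : Set (FreeMod k n d) := {h' | h' ∈ (H : Set (FreeMod k n d)) ∧ U.mkQ h' ∈ T}
      with hH₀def
    have hTsub : T ⊆ U.mkQ '' H₀ := by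
      intro t ht
      obtain ⟨h', hh', rfl⟩ := hT.subset ht
      exact ⟨h', ⟨hh', ht⟩, rfl⟩
    have hmem : U.mkQ h ∈ Submodule.span (MvPolynomial (Fin n) k) T := by
      rw [hspanT]; exact Submodule.mem_map_of_mem (hsub hhH).1
    have hmem2 : U.mkQ h ∈ (Submodule.span (MvPolynomial (Fin n) k) H₀).map U.mkQ := by
      have hle : Submodule.span (MvPolynomial (Fin n) k) T
          ≤ Submodule.span (MvPolynomial (Fin n) k) (U.mkQ '' H₀) := Submodule.span_mono hTsub
      rw [← Submodule.map_span] at hle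
      exact hle hmem
    obtain ⟨w, hw, hwq⟩ := hmem2
    have hhw : h - w ∈ U := by
      rw [← Submodule.ker_mkQ U, LinearMap.mem_ker, map_sub, hwq, sub_self]
    have hhmem : h ∈ Submodule.span (MvPolynomial (Fin n) k) H₀ ⊔ U := by
      have := Submodule.add_mem_sup hw hhw
      rwa [show w + (h - w) = h by abel] at this
    set S' : Set (ModMon n d) := {m | (mmVec m : FreeMod k n d) ∈ H₀} ∪ SU with hS'def
    have himg2 : (mmVec '' S' : Set (FreeMod k n d)) = H₀ ∪ mmVec '' SU := by
      rw [hS'def, Set.image_union]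
      congr 1
      ext v
      constructor
      · rintro ⟨m, hm, rfl⟩; exact hm
      · intro hv
        obtain ⟨m₀, hm₀, -⟩ := hmono v hv.1
        exact ⟨m₀, by rw [Set.mem_setOf_eq, ← hm₀]; exact hv, hm₀.symm⟩
    have hsup : Submodule.span (MvPolynomial (Fin n) k) H₀ ⊔ U
        = Submodule.span (MvPolynomial (Fin n) k) ((mmVec '' S' : Set (FreeMod k n d))) := by
      rw [himg2, Submodule.span_union, hSU]
    rw [hsup] at hhmem
    obtain ⟨mh, hmh, -⟩ := hmono h hhH
    have hmhsupp : mh ∈ suppF h := by rw [hmh, suppF_mmVec]; simp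
    have hP := suppF_span_induction S'
      (fun m => (mmVec m : FreeMod k n d) ∈ U ∨ ∃ h' ∈ H₀, dvdV h' (mmVec m : FreeMod k n d))
      (by
        rintro s (hs | hs)
        · exact Or.inr ⟨mmVec s, hs, 1, (one_smul _ _).symm⟩
        · refine Or.inl ?_
          rw [hSU]
          exact Submodule.subset_span ⟨s, hs, rfl⟩)
      (by
        rintro β m (hmU | ⟨h', hh', p, hp⟩)
        · exact Or.inl (by rw [← monomial_smul_mmVec]; exact U.smul_mem _ hmU)
        · exact Or.inr ⟨h', hh', MvPolynomial.monomial β 1 * p,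
            by rw [← monomial_smul_mmVec, hp, smul_smul]⟩)
      h hhmem mh hmhsupp
    rcases hP with hPU | ⟨h', hh'0, p, hp⟩
    · exact (hsub hhH).2 (by rw [hmh]; exact hPU)
    · rcases eq_or_ne h' h with rfl | hne'
      · exact hxT hh'0.2
      · refine hmin h' hh'0.1 h hhH hne' ?_
        rw [hlmid h' hh'0.1, hlmid h hhH]
        exact ⟨p, by rw [hmh]; exact hp⟩
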